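/- (Fukasawa conditions for SSVI.) Let ρ ∈ (−1,1), γ = √(1−ρ²), μ = −ρ/√(1−ρ²), and 0 < b ≤ 2/(1+|ρ|). Then the Fukasawa conditions hold: h(l) − b·g(l) > 0 and h(l) + b·g(l) > 0 for every l ∈ ℝ. -/

import Mathlib

/-- SVI normalized total variance shape: `N(l) = γ + ρ·l + √(l²+1)`. -/
noncomputable def Nf (γ ρ l : ℝ) : ℝ := γ + ρ * l + Real.sqrt (l ^ 2 + 1)

/-- `N'(l) = ρ + l/√(l²+1)`. -/
noncomputable def Nf' (ρ l : ℝ) : ℝ := ρ + l / Real.sqrt (l ^ 2 + 1)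

/-- `N''(l) = (l²+1)^(−3/2)`. -/
noncomputable def Nf'' (l : ℝ) : ℝ := (l ^ 2 + 1) ^ (-(3 : ℝ) / 2)

/-- `h(l) = 1 − N'(l)·(l+μ)/(2N(l))`. -/
noncomputable def hf (γ ρ μ l : ℝ) : ℝ := 1 - Nf' ρ l * (l + μ) / (2 * Nf γ ρ l)

/-- `g(l) = N'(l)/4`. -/
noncomputable def gf (ρ l : ℝ) : ℝ := Nf' ρ l / 4

/-- `g₂(l) = N''(l) − N'(l)²/(2N(l))`. -/
noncomputable def g2 (γ ρ l : ℝ) : ℝ := Nf'' l - (Nf' ρ l) ^ 2 / (2 * Nf γ ρ l)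

/-- `G₁(l) = (h(l) − b·g(l))·(h(l) + b·g(l))`. -/
noncomputable def G1 (γ b ρ μ l : ℝ) : ℝ :=
  (hf γ ρ μ l - b * gf ρ l) * (hf γ ρ μ l + b * gf ρ l)

/-- Fukasawa (weak no-arbitrage) conditions: both factors of `G₁` are positive on `ℝ`. -/
def FukasawaCond (γ b ρ μ : ℝ) : Prop :=
  ∀ l : ℝ, 0 < hf γ ρ μ l - b * gf ρ l ∧ 0 < hf γ ρ μ l + b * gf ρ l

/-- No Butterfly arbitrage (Martini–Mingone characterization): Fukasawa conditions plus
`G₁ + (b/(2σ))·g₂ ≥ 0` on `ℝ`. -/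
def ArbitrageFree (γ b ρ μ σ : ℝ) : Prop :=
  FukasawaCond γ b ρ μ ∧ ∀ l : ℝ, 0 ≤ G1 γ b ρ μ l + b / (2 * σ) * g2 γ ρ l


lemma hf_ssvi (ρ l : ℝ) (hρ : ρ ^ 2 < 1) :
    hf (Real.sqrt (1 - ρ ^ 2)) ρ (-ρ / Real.sqrt (1 - ρ ^ 2)) l
      = 1 / 2 + 1 / (2 * Real.sqrt (1 - ρ ^ 2) * Real.sqrt (l ^ 2 + 1)) := by
  have hγpos : 0 < Real.sqrt (1 - ρ ^ 2) := Real.sqrt_pos.2 (by linarith)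
  have hγ2 : Real.sqrt (1 - ρ ^ 2) ^ 2 = 1 - ρ ^ 2 := Real.sq_sqrt (by linarith)
  have hspos : 0 < Real.sqrt (l ^ 2 + 1) := Real.sqrt_pos.2 (by positivity)
  have hs2 : Real.sqrt (l ^ 2 + 1) ^ 2 = l ^ 2 + 1 := Real.sq_sqrt (by positivity)
  set γ := Real.sqrt (1 - ρ ^ 2)
  set s := Real.sqrt (l ^ 2 + 1)
  have hls : |l| ≤ s := by nlinarith [abs_nonneg l, sq_abs l]
  have hρ1 : |ρ| < 1 := by nlinarith [sq_abs ρ, abs_nonneg ρ]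
  have hNpos : 0 < Nf γ ρ l := by
    have h1 : |ρ * l| ≤ s := by
      rw [abs_mul]
      calc |ρ| * |l| ≤ 1 * |l| :=
            mul_le_mul_of_nonneg_right (le_of_lt hρ1) (abs_nonneg l)
        _ ≤ s := by simpa using hls
    have := (abs_le.1 h1).1
    show 0 < γ + ρ * l + s
    linarith
  have hNne : Nf γ ρ l ≠ 0 := ne_of_gt hNpos
  have hkey : Nf' ρ l * (l + -ρ / γ) = Nf γ ρ l * (1 - 1 / (γ * s)) := by
    unfold Nf' Nf
    field_simp
    linear_combination (-Real.sqrt (l ^ 2 + 1) ^ 2) * hγ2 + (-Real.sqrt (l ^ 2 + 1) * γ) * (Real.sq_sqrt (by positivity : (0:ℝ) ≤ l ^ 2 + 1))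
  unfold hf
  rw [hkey]
  field_simp
  ring

/-- an SSVI slice (γ = √(1−ρ²), μ = −ρ/√(1−ρ²)) with
0 < b ≤ 2/(1+|ρ|) always satisfies the Fukasawa conditions. -/
theorem fukasawa_ssvi (ρ b : ℝ) (hρ : ρ ∈ Set.Ioo (-1 : ℝ) 1) (hb : 0 < b)
    (hb2 : b ≤ 2 / (1 + |ρ|)) :
    FukasawaCond (Real.sqrt (1 - ρ ^ 2)) b ρ (-ρ / Real.sqrt (1 - ρ ^ 2)) := by
  obtain ⟨hρ1, hρ2⟩ := hρ
  have hρsq : ρ ^ 2 < 1 := by nlinarith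
  intro l
  have hγpos : 0 < Real.sqrt (1 - ρ ^ 2) := Real.sqrt_pos.2 (by linarith)
  have hspos : 0 < Real.sqrt (l ^ 2 + 1) := Real.sqrt_pos.2 (by positivity)
  have hs2 : Real.sqrt (l ^ 2 + 1) ^ 2 = l ^ 2 + 1 := Real.sq_sqrt (by positivity)
  have hls : |l| ≤ Real.sqrt (l ^ 2 + 1) := by nlinarith [abs_nonneg l, sq_abs l]
  have hN' : |Nf' ρ l| ≤ 1 + |ρ| := by
    unfold Nf'
    calc |ρ + l / Real.sqrt (l ^ 2 + 1)| ≤ |ρ| + |l / Real.sqrt (l ^ 2 + 1)| := abs_add_le _ _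
      _ ≤ |ρ| + 1 := by
          have h1 : |l / Real.sqrt (l ^ 2 + 1)| ≤ 1 := by
            rw [abs_div, abs_of_pos hspos]
            exact (div_le_one hspos).2 hls
          linarith
      _ = 1 + |ρ| := by ring
  have hbN : b * (1 + |ρ|) ≤ 2 := by
    have h1 : (0:ℝ) < 1 + |ρ| := by positivity
    calc b * (1 + |ρ|) ≤ 2 / (1 + |ρ|) * (1 + |ρ|) :=
          mul_le_mul_of_nonneg_right hb2 h1.le
      _ = 2 := div_mul_cancel₀ _ (ne_of_gt h1)
  have hg : |b * gf ρ l| ≤ 1 / 2 := by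
    rw [abs_mul, abs_of_pos hb]
    unfold gf
    rw [abs_div, show |(4:ℝ)| = 4 by norm_num]
    nlinarith [hN', abs_nonneg (Nf' ρ l)]
  have hga := abs_le.1 hg
  have hpos : 0 < 1 / (2 * Real.sqrt (1 - ρ ^ 2) * Real.sqrt (l ^ 2 + 1)) := by positivity
  rw [hf_ssvi ρ l hρsq]
  constructor <;> linarith [hga.1, hga.2]
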